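/- Let G = (X, Y, u) be a finite zero-sum game with X and Y finite. The double oracle algorithm with ε = 0 (solve subgame equilibrium, add one best response per player each iteration, stop when the duality gap is zero) terminates in finitely many iterations, and its output (p_i*, q_i*) is an exact equilibrium of G. -/

import Mathlib

open MeasureTheory

/-- for a finite game and ε = 0, the double oracle algorithm reaches, in
finitely many iterations, a step with zero duality gap whose subgame equilibrium is an
exact equilibrium of the full game. -/
theorem stmt_9 {m n : ℕ}
    (X : Set (EuclideanSpace ℝ (Fin m))) (Y : Set (EuclideanSpace ℝ (Fin n)))
    (hXne : X.Nonempty) (hXfin : X.Finite) (hYne : Y.Nonempty) (hYfin : Y.Finite)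
    (u : X × Y → ℝ)
    -- iterates of the double oracle algorithm
    (Xi : ℕ → Finset X) (Yi : ℕ → Finset Y)
    (hXi : ∀ i, (Xi i).Nonempty) (hYi : ∀ i, (Yi i).Nonempty)
    (ps : ℕ → Measure X) (qs : ℕ → Measure Y)
    (hpsprob : ∀ i, IsProbabilityMeasure (ps i)) (hqsprob : ∀ i, IsProbabilityMeasure (qs i))
    (hpssupp : ∀ i, ps i ((↑(Xi i) : Set X)ᶜ) = 0)
    (hqssupp : ∀ i, qs i ((↑(Yi i) : Set Y)ᶜ) = 0)
    -- (ps i, qs i) is an equilibrium of the subgame (Xi i, Yi i, u)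
    (hsub₁ : ∀ i, ∀ x ∈ Xi i,
      ∫ z, u z ∂((Measure.dirac x).prod (qs i)) ≤ ∫ z, u z ∂((ps i).prod (qs i)))
    (hsub₂ : ∀ i, ∀ y ∈ Yi i,
      ∫ z, u z ∂((ps i).prod (qs i)) ≤ ∫ z, u z ∂((ps i).prod (Measure.dirac y)))
    -- best responses over the full strategy sets
    (xseq : ℕ → X) (yseq : ℕ → Y)
    (hx : ∀ i, ∀ x : X,
      ∫ z, u z ∂((Measure.dirac x).prod (qs i)) ≤ ∫ z, u z ∂((Measure.dirac (xseq i)).prod (qs i)))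
    (hy : ∀ i, ∀ y : Y,
      ∫ z, u z ∂((ps i).prod (Measure.dirac (yseq i))) ≤ ∫ z, u z ∂((ps i).prod (Measure.dirac y)))
    -- subgames grow by adding the best responses
    (hXrec : ∀ i, (↑(Xi (i + 1)) : Set X) = insert (xseq i) ↑(Xi i))
    (hYrec : ∀ i, (↑(Yi (i + 1)) : Set Y) = insert (yseq i) ↑(Yi i)) :
    ∃ i,
      -- the duality gap is zero, i.e. the algorithm terminates at step i with ε = 0
      (∫ z, u z ∂((Measure.dirac (xseq i)).prod (qs i)))
        - (∫ z, u z ∂((ps i).prod (Measure.dirac (yseq i)))) = 0 ∧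
      -- and (ps i, qs i) is an exact equilibrium of G
      (∀ (p : Measure X) [IsProbabilityMeasure p],
        ∫ z, u z ∂(p.prod (qs i)) ≤ ∫ z, u z ∂((ps i).prod (qs i))) ∧
      (∀ (q : Measure Y) [IsProbabilityMeasure q],
        ∫ z, u z ∂((ps i).prod (qs i)) ≤ ∫ z, u z ∂((ps i).prod q)) := by
  haveI := hXfin.to_subtype
  haveI := hYfin.to_subtype
  haveI : DecidableEq ↥X := Classical.decEq _
  haveI : DecidableEq ↥Y := Classical.decEq _
  haveI := Fintype.ofFinite X
  haveI := Fintype.ofFinite Y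
  haveI := fun i => hpsprob i
  haveI := fun i => hqsprob i
  -- Finset-level recursion
  have hXrec' : ∀ i, Xi (i + 1) = insert (xseq i) (Xi i) := fun i => by
    apply Finset.coe_injective; rw [hXrec i, Finset.coe_insert]
  have hYrec' : ∀ i, Yi (i + 1) = insert (yseq i) (Yi i) := fun i => by
    apply Finset.coe_injective; rw [hYrec i, Finset.coe_insert]
  -- find a stabilization step: xseq i ∈ Xi i and yseq i ∈ Yi i
  obtain ⟨i, hxin, hyin⟩ : ∃ i, xseq i ∈ Xi i ∧ yseq i ∈ Yi i := by
    by_contra hcon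
    push_neg at hcon
    set g : ℕ → ℕ := fun i => (Xi i).card + (Yi i).card with hg
    have hmono : StrictMono g := by
      apply strictMono_nat_of_lt_succ
      intro i
      have hXle : (Xi i).card ≤ (Xi (i + 1)).card := by
        rw [hXrec' i]; exact Finset.card_le_card (Finset.subset_insert _ _)
      have hYle : (Yi i).card ≤ (Yi (i + 1)).card := by
        rw [hYrec' i]; exact Finset.card_le_card (Finset.subset_insert _ _)
      rcases Classical.em (xseq i ∈ Xi i) with hxi | hxi
      · have hyi := hcon i hxi
        have : (Yi i).card < (Yi (i + 1)).card := by
          rw [hYrec' i, Finset.card_insert_of_notMem hyi]; omega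
        simp only [hg]; omega
      · have : (Xi i).card < (Xi (i + 1)).card := by
          rw [hXrec' i, Finset.card_insert_of_notMem hxi]; omega
        simp only [hg]; omega
    set B : ℕ := Fintype.card X + Fintype.card Y with hB
    have hbd : ∀ i, g i ≤ B :=
      fun i => add_le_add (Finset.card_le_univ _) (Finset.card_le_univ _)
    have h1 : B + 1 ≤ g (B + 1) := hmono.le_apply
    have h2 := hbd (B + 1)
    omega
  refine ⟨i, ?_⟩
  -- rewrite all integrals in terms of iterated integrals
  set f : X → ℝ := fun x => ∫ y, u (x, y) ∂(qs i) with hf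
  set h : Y → ℝ := fun y => ∫ x, u (x, y) ∂(ps i) with hh
  have hdx : ∀ (x : X), ∫ z, u z ∂((Measure.dirac x).prod (qs i)) = f x := fun x => by
    rw [integral_prod _ (Integrable.of_finite), integral_dirac]
  have hdy : ∀ (y : Y), ∫ z, u z ∂((ps i).prod (Measure.dirac y)) = h y := fun y => by
    rw [integral_prod _ (Integrable.of_finite)]
    simp only [integral_dirac]
    rfl
  have hprodf : ∀ (p : Measure X) [IsProbabilityMeasure p],
      ∫ z, u z ∂(p.prod (qs i)) = ∫ x, f x ∂p := fun p _ => by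
    rw [integral_prod _ (Integrable.of_finite)]
  have hprodh : ∀ (q : Measure Y) [IsProbabilityMeasure q],
      ∫ z, u z ∂((ps i).prod q) = ∫ y, h y ∂q := fun q _ => by
    rw [integral_prod_symm _ (Integrable.of_finite)]
  set V : ℝ := ∫ z, u z ∂((ps i).prod (qs i)) with hV
  -- best-response values
  have hfmax : ∀ x : X, f x ≤ f (xseq i) := fun x => by
    have := hx i x; rwa [hdx, hdx] at this
  have hhmin : ∀ y : Y, h (yseq i) ≤ h y := fun y => by
    have := hy i y; rwa [hdy, hdy] at this
  -- averaging bounds: for a probability measure, the average of f is ≤ its max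
  have havgf : ∀ (p : Measure X) [IsProbabilityMeasure p], ∫ x, f x ∂p ≤ f (xseq i) := by
    intro p _
    calc ∫ x, f x ∂p ≤ ∫ _, f (xseq i) ∂p :=
          integral_mono (Integrable.of_finite) (integrable_const _) hfmax
      _ = f (xseq i) := by simp
  have havgh : ∀ (q : Measure Y) [IsProbabilityMeasure q], h (yseq i) ≤ ∫ y, h y ∂q := by
    intro q _
    calc h (yseq i) = ∫ _, h (yseq i) ∂q := by simp
      _ ≤ ∫ y, h y ∂q :=
          integral_mono (integrable_const _) (Integrable.of_finite) hhmin
  -- stabilization gives f (xseq i) ≤ V ≤ h (yseq i)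
  have hfV : f (xseq i) ≤ V := by
    have := hsub₁ i (xseq i) hxin; rwa [hdx] at this
  have hVh' : V ≤ h (yseq i) := by
    have := hsub₂ i (yseq i) hyin; rwa [hdy] at this
  -- and averaging gives the reverse inequalities
  have hVf : V ≤ f (xseq i) := by
    rw [hV, hprodf (ps i)]; exact havgf (ps i)
  have hhV : h (yseq i) ≤ V := by
    rw [hV, hprodh (qs i)]; exact havgh (qs i)
  have hfeq : f (xseq i) = V := le_antisymm hfV hVf
  have hheq : h (yseq i) = V := le_antisymm hhV hVh'
  refine ⟨?_, ?_, ?_⟩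
  · rw [hdx, hdy, hfeq, hheq, sub_self]
  · intro p _
    rw [hprodf p]
    calc ∫ x, f x ∂p ≤ f (xseq i) := havgf p
      _ ≤ V := hfV
  · intro q _
    rw [hprodh q]
    calc V ≤ h (yseq i) := hVh'.trans (le_of_eq rfl)
      _ ≤ ∫ y, h y ∂q := havgh q
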